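/- Let d ≥ 1, a > 0, b > 0, η > 0 and τ ≥ 0. Let f, h : ℝ^d → ℝ be Lipschitz continuous with constants L_f and L_h respectively, and assume ∫_{ℝ^d} e^{-f(x)-h(x)} dx < ∞. Let Q̃ = {(x,s,t) ∈ ℝ^d × ℝ × ℝ : h(x) ≤ a s, f(x) + a s ≤ b t}, set Z_{Q̃} = ∫_{Q̃} e^{-b t} dx ds dt, C̃_f = √(b² + a² + L_f²), C̃_h = √(a² + L_h²), and C̃_L = C̃_f + C̃_h. Then ∫_{ℝ^{d+2}} e^{-b q_{d+2}} · exp(−(dist(q, Q̃) − τ)²/(2η)) dq ≤ Z_{Q̃} · e^{τ C̃_L} · [ C̃_L·√(2πη)·e^{η C̃_L²/2} + 1 ], where q_{d+2} denotes the last coordinate of q ∈ ℝ^{d+2}. -/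

import Mathlib

open MeasureTheory Real Set Filter Topology
open scoped ENNReal

/-- The Euclidean norm of a point of `ℝ^d × ℝ × ℝ ≅ ℝ^{d+2}`. -/
noncomputable def enorm3 {d : ℕ} (p : EuclideanSpace ℝ (Fin d) × ℝ × ℝ) : ℝ :=
  Real.sqrt (‖p.1‖ ^ 2 + p.2.1 ^ 2 + p.2.2 ^ 2)

/-- The Euclidean distance from a point of `ℝ^{d+2}` to a set. -/
noncomputable def edist3 {d : ℕ} (q : EuclideanSpace ℝ (Fin d) × ℝ × ℝ)
    (Q : Set (EuclideanSpace ℝ (Fin d) × ℝ × ℝ)) : ℝ :=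
  sInf ((fun p => enorm3 (q - p)) '' Q)

noncomputable def auxPhi (η τ r : ℝ) : ℝ :=
  max (r - τ) 0 / η * Real.exp (-max (r - τ) 0 ^ 2 / (2*η))

lemma aux_cs2 (a Lh X S T : ℝ) :
    (Lh * X - a * S) ^ 2 ≤ (a ^ 2 + Lh ^ 2) * (X ^ 2 + S ^ 2 + T ^ 2) := by
  nlinarith [sq_nonneg (a * X + Lh * S), sq_nonneg T]

lemma aux_cs3 (a b Lf X S T : ℝ) :
    (Lf * X + a * S - b * T) ^ 2 ≤ (b ^ 2 + a ^ 2 + Lf ^ 2) * (X ^ 2 + S ^ 2 + T ^ 2) := by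
  nlinarith [sq_nonneg (Lf * S - a * X), sq_nonneg (Lf * T + b * X), sq_nonneg (a * T + b * S)]

lemma aux_maxsq (x : ℝ) : HasDerivAt (fun t : ℝ => max t 0 ^ 2) (2 * max x 0) x := by
  rcases lt_trichotomy x 0 with hx | hx | hx
  · have hev : (fun t : ℝ => max t 0 ^ 2) =ᶠ[nhds x] fun _ => (0:ℝ) := by
      filter_upwards [Iio_mem_nhds hx] with t ht
      have : t < 0 := ht
      simp [max_eq_right this.le]
    rw [max_eq_right hx.le]
    simpa using (hasDerivAt_const x (0:ℝ)).congr_of_eventuallyEq hev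
  · subst hx
    rw [hasDerivAt_iff_isLittleO]
    rw [Asymptotics.isLittleO_iff]
    intro c hc
    filter_upwards [Metric.ball_mem_nhds (0:ℝ) hc] with t ht
    simp only [Metric.mem_ball, Real.dist_eq, sub_zero] at ht
    simp only [max_self, sub_zero, smul_eq_mul, mul_zero, Real.norm_eq_abs, zero_pow,
      ne_eq, OfNat.ofNat_ne_zero, not_false_iff]
    have h1 : |max t 0 ^ 2| ≤ |t| * |t| := by
      rcases le_or_gt t 0 with hle | hlt
      · rw [max_eq_right hle]
        simpa using mul_nonneg (abs_nonneg t) (abs_nonneg t)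
      · rw [max_eq_left hlt.le]
        rw [pow_two, abs_mul]
    calc |max t 0 ^ 2| ≤ |t| * |t| := h1
      _ ≤ c * |t| := mul_le_mul_of_nonneg_right ht.le (abs_nonneg t)
  · have hev : (fun t : ℝ => max t 0 ^ 2) =ᶠ[nhds x] fun t => t ^ 2 := by
      filter_upwards [Ioi_mem_nhds hx] with t ht
      have : 0 < t := ht
      simp [max_eq_left this.le]
    rw [max_eq_left hx.le]
    have h2 : HasDerivAt (fun t : ℝ => t ^ 2) (2 * x) x := by
      simpa using hasDerivAt_pow 2 x
    exact h2.congr_of_eventuallyEq hev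

lemma aux_abs_gauss_integrable {c : ℝ} (hc : 0 < c) :
    Integrable (fun u : ℝ => |u| * Real.exp (-c * u ^ 2)) := by
  have h := integrable_rpow_mul_exp_neg_mul_sq hc (s := 1) (by norm_num)
  have h2 : Integrable (fun x : ℝ => x * Real.exp (-c * x ^ 2)) :=
    h.congr (Eventually.of_forall fun x => by simp [Real.rpow_one])
  have h3 := h2.abs
  exact h3.congr (Eventually.of_forall fun x => by
    simp only [abs_mul, abs_of_pos (Real.exp_pos _)])

lemma aux_phi_integrable_raw (η τ : ℝ) (hη : 0 < η) :
    Integrable (fun r : ℝ => max (r - τ) 0 / η * Real.exp (-max (r - τ) 0 ^ 2 / (2*η))) := by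
  have hdom : Integrable
      (fun r : ℝ => (1/η) * (|r - τ| * Real.exp (-(1/(2*η)) * (r - τ) ^ 2))) :=
    ((aux_abs_gauss_integrable (by positivity : (0:ℝ) < 1/(2*η))).comp_sub_right τ).const_mul _
  apply hdom.mono'
  · apply Continuous.aestronglyMeasurable
    fun_prop
  · refine Eventually.of_forall fun r => ?_
    have hm : (0:ℝ) ≤ max (r - τ) 0 := le_max_right _ _
    rw [Real.norm_eq_abs, abs_of_nonneg (by positivity)]
    rcases le_or_gt r τ with hle | hlt
    · rw [max_eq_right (by linarith)]
      simp only [zero_div, zero_mul]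
      positivity
    · rw [max_eq_left (by linarith)]
      have h1 : -(r - τ) ^ 2 / (2*η) = -(1/(2*η)) * (r - τ) ^ 2 := by
        field_simp
      rw [h1]
      rw [div_eq_mul_inv, abs_of_nonneg (by linarith : (0:ℝ) ≤ r - τ)]
      ring_nf
      exact le_refl _

lemma aux_tail_raw (η τ x : ℝ) (hη : 0 < η) :
    ∫⁻ r in Ioi x, ENNReal.ofReal (max (r - τ) 0 / η * Real.exp (-max (r - τ) 0 ^ 2 / (2*η)))
      = ENNReal.ofReal (Real.exp (-max (x - τ) 0 ^ 2 / (2*η))) := by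
  have hder : ∀ y : ℝ, HasDerivAt (fun r => -Real.exp (-max (r - τ) 0 ^ 2 / (2*η)))
      (max (y - τ) 0 / η * Real.exp (-max (y - τ) 0 ^ 2 / (2*η))) y := by
    intro y
    have h1 : HasDerivAt (fun r : ℝ => max (r - τ) 0 ^ 2) (2 * max (y - τ) 0 * 1) y :=
      by have := (aux_maxsq (y - τ)).comp y ((hasDerivAt_id y).sub_const τ); exact this
    have h2 : HasDerivAt (fun r : ℝ => -max (r - τ) 0 ^ 2 / (2*η))
        (-(2 * max (y - τ) 0 * 1) / (2*η)) y := by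
      have h := (h1.div_const (2*η)).neg
      rw [show (-(2 * max (y - τ) 0 * 1) / (2*η)) = -(2 * max (y - τ) 0 * 1 / (2*η)) by ring]
      refine h.congr_of_eventuallyEq (Eventually.of_forall fun r => ?_)
      simp [neg_div]
    have h3 := (h2.exp).neg
    refine h3.congr_deriv ?_
    ring
  have hlim : Tendsto (fun r : ℝ => -Real.exp (-max (r - τ) 0 ^ 2 / (2*η))) atTop (𝓝 0) := by
    have h1 : Tendsto (fun r : ℝ => r - τ) atTop atTop :=
      tendsto_atTop_add_const_right _ (-τ) tendsto_id
    have h2 : Tendsto (fun r : ℝ => max (r - τ) 0) atTop atTop :=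
      tendsto_atTop_mono (fun r => le_max_left _ _) h1
    have h3 : Tendsto (fun r : ℝ => max (r - τ) 0 ^ 2) atTop atTop :=
      (tendsto_pow_atTop two_ne_zero).comp h2
    have h4 : Tendsto (fun r : ℝ => max (r - τ) 0 ^ 2 / (2*η)) atTop atTop :=
      h3.atTop_div_const (by positivity)
    have h5 : Tendsto (fun r : ℝ => -max (r - τ) 0 ^ 2 / (2*η)) atTop atBot := by
      simp only [neg_div]
      exact tendsto_neg_atTop_atBot.comp h4
    have h6 : Tendsto (fun r : ℝ => Real.exp (-max (r - τ) 0 ^ 2 / (2*η))) atTop (𝓝 0) :=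
      Real.tendsto_exp_atBot.comp h5
    simpa using h6.neg
  have hFTC := integral_Ioi_of_hasDerivAt_of_tendsto' (a := x) (f' := fun r =>
      max (r - τ) 0 / η * Real.exp (-max (r - τ) 0 ^ 2 / (2*η)))
    (fun y _ => hder y) ((aux_phi_integrable_raw η τ hη).integrableOn) hlim
  rw [← ofReal_integral_eq_lintegral_ofReal ((aux_phi_integrable_raw η τ hη).integrableOn)
    (Eventually.of_forall fun r => by positivity)]
  rw [hFTC]
  ring_nf

lemma aux_phi_integrable (η τ : ℝ) (hη : 0 < η) : Integrable (auxPhi η τ) :=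
  (aux_phi_integrable_raw η τ hη).congr (Filter.Eventually.of_forall fun r => rfl)

lemma aux_tail (η τ x : ℝ) (hη : 0 < η) :
    ∫⁻ r in Ioi x, ENNReal.ofReal (auxPhi η τ r)
      = ENNReal.ofReal (Real.exp (-max (x - τ) 0 ^ 2 / (2*η))) := by
  simp only [auxPhi]
  exact aux_tail_raw η τ x hη

lemma aux_psi (η C : ℝ) (hη : 0 < η) (hC : 0 ≤ C) :
    ∫⁻ u in Ioi (0:ℝ), ENNReal.ofReal (u / η * Real.exp (C*u - u^2/(2*η)))
      ≤ ENNReal.ofReal (C * Real.sqrt (2*Real.pi*η) * Real.exp (η*C^2/2) + 1) := by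
  have hFeq : ∀ u : ℝ, Real.exp (C*u - u^2/(2*η))
      = Real.exp (η*C^2/2) * Real.exp (-(1/(2*η)) * (u - η*C)^2) := by
    intro u
    rw [← Real.exp_add]
    congr 1
    field_simp
    ring
  have hG : Integrable (fun u : ℝ => Real.exp (-(1/(2*η)) * (u - η*C)^2)) :=
    (integrable_exp_neg_mul_sq (by positivity : (0:ℝ) < 1/(2*η))).comp_sub_right (η*C)
  have hF : Integrable (fun u : ℝ => Real.exp (C*u - u^2/(2*η))) := by
    simp only [hFeq]
    exact hG.const_mul _
  have hAG : Integrable (fun u : ℝ => |u - η*C| * Real.exp (-(1/(2*η)) * (u - η*C)^2)) :=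
    (aux_abs_gauss_integrable (by positivity : (0:ℝ) < 1/(2*η))).comp_sub_right (η*C)
  have hψ : Integrable (fun u : ℝ => u / η * Real.exp (C*u - u^2/(2*η))) := by
    have hdom : Integrable (fun u : ℝ => (Real.exp (η*C^2/2) / η) *
        (|u - η*C| * Real.exp (-(1/(2*η)) * (u - η*C)^2)
          + (η*C) * Real.exp (-(1/(2*η)) * (u - η*C)^2))) :=
      (hAG.add (hG.const_mul _)).const_mul _
    apply hdom.mono'
    · apply Continuous.aestronglyMeasurable; fun_prop
    · refine Eventually.of_forall fun u => ?_
      rw [Real.norm_eq_abs, hFeq u, abs_mul, abs_mul,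
        abs_of_pos (Real.exp_pos _), abs_of_pos (Real.exp_pos _), abs_div,
        abs_of_pos hη]
      have h1 : |u| ≤ |u - η*C| + η*C := by
        have := abs_sub_abs_le_abs_sub u (η*C)
        have h2 : |η*C| = η*C := abs_of_nonneg (by positivity)
        linarith [abs_sub_abs_le_abs_sub u (η*C)]
      have hep : (0:ℝ) < Real.exp (-(1/(2*η)) * (u - η*C)^2) := Real.exp_pos _
      calc |u| / η * (Real.exp (η*C^2/2) * Real.exp (-(1/(2*η)) * (u - η*C)^2))
          ≤ (|u - η*C| + η*C) / η * (Real.exp (η*C^2/2) * Real.exp (-(1/(2*η)) * (u - η*C)^2)) := by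
            gcongr
        _ = Real.exp (η*C^2/2) / η * (|u - η*C| * Real.exp (-(1/(2*η)) * (u - η*C)^2)
              + (η*C) * Real.exp (-(1/(2*η)) * (u - η*C)^2)) := by ring
  have hG' : Integrable (fun u : ℝ => (u/η - C) * Real.exp (C*u - u^2/(2*η))) := by
    have := hψ.sub (hF.const_mul C)
    apply this.congr
    refine Eventually.of_forall fun u => ?_
    simp only [Pi.sub_apply]
    ring
  have hder : ∀ u : ℝ, HasDerivAt (fun u : ℝ => -Real.exp (C*u - u^2/(2*η)))
      ((u/η - C) * Real.exp (C*u - u^2/(2*η))) u := by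
    intro u
    have h1 : HasDerivAt (fun u : ℝ => C*u - u^2/(2*η)) (C - 2*u^1/(2*η)) u := by
      have ha : HasDerivAt (fun u : ℝ => C*u) C u := by
        simpa using (hasDerivAt_id u).const_mul C
      exact ha.sub ((hasDerivAt_pow 2 u).div_const (2*η))
    have h2 := (h1.exp).neg
    refine h2.congr_deriv ?_
    ring
  have hlim : Tendsto (fun u : ℝ => -Real.exp (C*u - u^2/(2*η))) atTop (𝓝 0) := by
    have h1 : Tendsto (fun u : ℝ => (u - η*C)^2) atTop atTop :=
      (tendsto_pow_atTop two_ne_zero).comp (tendsto_atTop_add_const_right _ (-(η*C))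
        tendsto_id |>.congr (fun u => by simp only [id_eq]; ring))
    have h2 : Tendsto (fun u : ℝ => -(1/(2*η)) * (u - η*C)^2) atTop atBot := by
      have h3 : Tendsto (fun u : ℝ => (1/(2*η)) * (u - η*C)^2) atTop atTop :=
        h1.const_mul_atTop (by positivity)
      have := tendsto_neg_atTop_atBot.comp h3
      apply this.congr
      intro u
      simp only [Function.comp_apply]
      ring
    have h4 : Tendsto (fun u : ℝ => Real.exp (-(1/(2*η)) * (u - η*C)^2)) atTop (𝓝 0) :=
      Real.tendsto_exp_atBot.comp h2
    have h5 : Tendsto (fun u : ℝ => Real.exp (C*u - u^2/(2*η))) atTop (𝓝 0) := by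
      simp only [hFeq]
      simpa using h4.const_mul (Real.exp (η*C^2/2))
    simpa using h5.neg
  have hFTC := integral_Ioi_of_hasDerivAt_of_tendsto' (a := (0:ℝ))
    (f' := fun u => (u/η - C) * Real.exp (C*u - u^2/(2*η)))
    (fun u _ => hder u) hG'.integrableOn hlim
  norm_num at hFTC
  -- hFTC : ∫ u in Ioi 0, (u/η - C) * F u = 0 - -1 = 1
  have hIF : ∫ u in Ioi (0:ℝ), Real.exp (C*u - u^2/(2*η))
      ≤ Real.sqrt (2*Real.pi*η) * Real.exp (η*C^2/2) := by
    have hle : ∫ u in Ioi (0:ℝ), Real.exp (C*u - u^2/(2*η))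
        ≤ ∫ u : ℝ, Real.exp (C*u - u^2/(2*η)) :=
      setIntegral_le_integral hF (Eventually.of_forall fun u => (Real.exp_pos _).le)
    have heq : ∫ u : ℝ, Real.exp (C*u - u^2/(2*η))
        = Real.exp (η*C^2/2) * ∫ u : ℝ, Real.exp (-(1/(2*η)) * (u - η*C)^2) := by
      simp only [hFeq]
      rw [integral_const_mul]
    have hgauss : ∫ u : ℝ, Real.exp (-(1/(2*η)) * (u - η*C)^2)
        = Real.sqrt (2*Real.pi*η) := by
      have h1 : ∫ u : ℝ, Real.exp (-(1/(2*η)) * (u - η*C)^2)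
          = ∫ u : ℝ, Real.exp (-(1/(2*η)) * u^2) := by
        have := integral_add_right_eq_self (μ := volume) (fun u : ℝ => Real.exp (-(1/(2*η)) * u^2)) (-(η*C))
        rw [← this]
        apply integral_congr_ae
        refine Filter.Eventually.of_forall fun u => ?_
        ring_nf
      rw [h1, integral_gaussian]
      congr 1
      field_simp
    rw [heq, hgauss] at hle
    linarith
  have hsplit : ∫ u in Ioi (0:ℝ), u / η * Real.exp (C*u - u^2/(2*η))
      = (∫ u in Ioi (0:ℝ), (u/η - C) * Real.exp (C*u - u^2/(2*η)))
        + C * ∫ u in Ioi (0:ℝ), Real.exp (C*u - u^2/(2*η)) := by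
    rw [← integral_const_mul, ← integral_add hG'.integrableOn
      ((hF.const_mul C).integrableOn)]
    congr 1
    funext u
    ring
  have hval : ∫ u in Ioi (0:ℝ), u / η * Real.exp (C*u - u^2/(2*η))
      ≤ C * Real.sqrt (2*Real.pi*η) * Real.exp (η*C^2/2) + 1 := by
    rw [hsplit, hFTC]
    have := mul_le_mul_of_nonneg_left hIF hC
    linarith
  rw [← ofReal_integral_eq_lintegral_ofReal hψ.integrableOn
    (ae_restrict_of_forall_mem measurableSet_Ioi fun u hu => by
      have : (0:ℝ) < u := hu
      positivity)]
  exact ENNReal.ofReal_le_ofReal hval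

lemma aux_phi_exp (η τ C : ℝ) (hη : 0 < η) (hτ : 0 ≤ τ) (hC : 0 ≤ C) :
    ∫⁻ r : ℝ, ENNReal.ofReal (auxPhi η τ r * Real.exp (C*r))
      ≤ ENNReal.ofReal (Real.exp (τ*C)
          * (C * Real.sqrt (2*Real.pi*η) * Real.exp (η*C^2/2) + 1)) := by
  unfold auxPhi
  have htrans2 := lintegral_add_right_eq_self (μ := volume) (fun r : ℝ => ENNReal.ofReal
      (max (r - τ) 0 / η * Real.exp (-max (r - τ) 0 ^ 2 / (2*η)) * Real.exp (C*r))) τ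
  rw [← htrans2]
  have hfun : ∀ u : ℝ, ENNReal.ofReal
      (max (u + τ - τ) 0 / η * Real.exp (-max (u + τ - τ) 0 ^ 2 / (2*η)) * Real.exp (C*(u+τ)))
      = (Ioi (0:ℝ)).indicator (fun u => ENNReal.ofReal
          (Real.exp (τ*C) * (u / η * Real.exp (C*u - u^2/(2*η))))) u := by
    intro u
    have hu' : u + τ - τ = u := by ring
    rw [hu']
    rcases lt_or_ge 0 u with hu | hu
    · rw [Set.indicator_of_mem (by exact hu : u ∈ Ioi (0:ℝ))]
      congr 1
      rw [max_eq_left hu.le, mul_assoc, ← Real.exp_add,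
        show -u ^ 2 / (2*η) + C*(u+τ) = τ*C + (C*u - u^2/(2*η)) by ring,
        Real.exp_add]
      ring
    · rw [Set.indicator_of_notMem (by simpa using hu)]
      rw [max_eq_right (by linarith)]
      simp
  simp only [hfun]
  rw [lintegral_indicator measurableSet_Ioi]
  calc ∫⁻ u in Ioi (0:ℝ), ENNReal.ofReal
        (Real.exp (τ*C) * (u / η * Real.exp (C*u - u^2/(2*η))))
      = ENNReal.ofReal (Real.exp (τ*C))
        * ∫⁻ u in Ioi (0:ℝ), ENNReal.ofReal (u / η * Real.exp (C*u - u^2/(2*η))) := by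
        rw [← lintegral_const_mul' _ _ ENNReal.ofReal_ne_top]
        congr 1
        funext u
        rcases lt_or_ge 0 u with hu | hu
        · rw [← ENNReal.ofReal_mul (Real.exp_pos _).le]
        · rw [← ENNReal.ofReal_mul (Real.exp_pos _).le]
    _ ≤ ENNReal.ofReal (Real.exp (τ*C))
        * ENNReal.ofReal (C * Real.sqrt (2*Real.pi*η) * Real.exp (η*C^2/2) + 1) :=
        mul_le_mul_right (aux_psi η C hη hC) _
    _ = ENNReal.ofReal (Real.exp (τ*C)
          * (C * Real.sqrt (2*Real.pi*η) * Real.exp (η*C^2/2) + 1)) := by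
        rw [← ENNReal.ofReal_mul (Real.exp_pos _).le]

lemma aux_phi_cont (η τ : ℝ) (hη : 0 < η) : Continuous (auxPhi η τ) := by
  unfold auxPhi
  fun_prop

lemma aux_phi_nonneg (η τ : ℝ) (hη : 0 < η) (r : ℝ) : 0 ≤ auxPhi η τ r := by
  unfold auxPhi
  have : (0:ℝ) ≤ max (r - τ) 0 := le_max_right _ _
  positivity

set_option maxHeartbeats 1000000 in
/-- Key technical estimate (composite case): for
`Q̃ = {(x,s,t) : h x ≤ a s, f x + a s ≤ b t}` with `f, h` Lipschitz (constants `L_f, L_h`),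
`∫ e^{-f-h} < ∞`, and `C̃_L = √(b²+a²+L_f²) + √(a²+L_h²)`, for any `τ ≥ 0`,
`∫_{ℝ^{d+2}} e^{-b q_{d+2}} exp(-(dist(q,Q̃)-τ)²/(2η)) dq
  ≤ Z_{Q̃} e^{τC̃_L} (C̃_L √(2πη) e^{ηC̃_L²/2} + 1)`. -/
theorem stmt_16 {d : ℕ} (hd : 1 ≤ d) (a b η τ Lf Lh : ℝ)
    (ha : 0 < a) (hb : 0 < b) (hη : 0 < η) (hτ : 0 ≤ τ)
    (f h : EuclideanSpace ℝ (Fin d) → ℝ)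
    (hfL : ∀ u v, |f u - f v| ≤ Lf * ‖u - v‖)
    (hhL : ∀ u v, |h u - h v| ≤ Lh * ‖u - v‖)
    (hint : (∫⁻ x : EuclideanSpace ℝ (Fin d),
      ENNReal.ofReal (Real.exp (-f x - h x))) < ⊤) :
    ∫⁻ q : EuclideanSpace ℝ (Fin d) × ℝ × ℝ,
      ENNReal.ofReal (Real.exp (-b * q.2.2) *
        Real.exp (-(edist3 q {p : EuclideanSpace ℝ (Fin d) × ℝ × ℝ |
            h p.1 ≤ a * p.2.1 ∧ f p.1 + a * p.2.1 ≤ b * p.2.2} - τ) ^ 2 / (2 * η)))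
    ≤ (∫⁻ p in {p : EuclideanSpace ℝ (Fin d) × ℝ × ℝ |
            h p.1 ≤ a * p.2.1 ∧ f p.1 + a * p.2.1 ≤ b * p.2.2},
          ENNReal.ofReal (Real.exp (-b * p.2.2)))
      * ENNReal.ofReal
          (Real.exp (τ * (Real.sqrt (b ^ 2 + a ^ 2 + Lf ^ 2) + Real.sqrt (a ^ 2 + Lh ^ 2))) *
            ((Real.sqrt (b ^ 2 + a ^ 2 + Lf ^ 2) + Real.sqrt (a ^ 2 + Lh ^ 2))
                * Real.sqrt (2 * Real.pi * η)
                * Real.exp (η * (Real.sqrt (b ^ 2 + a ^ 2 + Lf ^ 2)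
                    + Real.sqrt (a ^ 2 + Lh ^ 2)) ^ 2 / 2) + 1)) := by
  classical
  set Q : Set (EuclideanSpace ℝ (Fin d) × ℝ × ℝ) :=
    {p : EuclideanSpace ℝ (Fin d) × ℝ × ℝ |
      h p.1 ≤ a * p.2.1 ∧ f p.1 + a * p.2.1 ≤ b * p.2.2} with hQdef
  set Cf := Real.sqrt (b ^ 2 + a ^ 2 + Lf ^ 2) with hCfdef
  set Ch := Real.sqrt (a ^ 2 + Lh ^ 2) with hChdef
  have hCf : 0 < Cf := Real.sqrt_pos.mpr (by positivity)
  have hCh : 0 < Ch := Real.sqrt_pos.mpr (by positivity)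
  have hCfsq : Cf ^ 2 = b ^ 2 + a ^ 2 + Lf ^ 2 := Real.sq_sqrt (by positivity)
  have hChsq : Ch ^ 2 = a ^ 2 + Lh ^ 2 := Real.sq_sqrt (by positivity)
  set C := Cf + Ch with hCdef
  have hC0 : 0 ≤ C := by positivity
  -- continuity of f and h
  have hfc : Continuous f := by
    have : LipschitzWith (Real.toNNReal Lf) f := by
      apply LipschitzWith.of_dist_le_mul
      intro u v
      rw [Real.dist_eq, dist_eq_norm]
      refine le_trans (hfL u v) ?_
      have : Lf ≤ (Real.toNNReal Lf : ℝ) := by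
        rw [Real.coe_toNNReal']
        exact le_max_left _ _
      exact mul_le_mul_of_nonneg_right this (norm_nonneg _)
    exact this.continuous
  have hhc : Continuous h := by
    have : LipschitzWith (Real.toNNReal Lh) h := by
      apply LipschitzWith.of_dist_le_mul
      intro u v
      rw [Real.dist_eq, dist_eq_norm]
      refine le_trans (hhL u v) ?_
      have : Lh ≤ (Real.toNNReal Lh : ℝ) := by
        rw [Real.coe_toNNReal']
        exact le_max_left _ _
      exact mul_le_mul_of_nonneg_right this (norm_nonneg _)
    exact this.continuous
  -- the violation functional
  set G : EuclideanSpace ℝ (Fin d) × ℝ × ℝ → ℝ := fun q =>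
    max (max ((h q.1 - a * q.2.1) / Ch) ((f q.1 + a * q.2.1 - b * q.2.2) / Cf)) 0 with hGdef
  have hGc : Continuous G := by
    apply Continuous.max _ continuous_const
    apply Continuous.max
    · exact ((hhc.comp continuous_fst).sub
        (continuous_const.mul (continuous_fst.comp continuous_snd))).div_const _
    · exact (((hfc.comp continuous_fst).add
        (continuous_const.mul (continuous_fst.comp continuous_snd))).sub
        (continuous_const.mul (continuous_snd.comp continuous_snd))).div_const _
  have hG0 : ∀ q, 0 ≤ G q := fun q => le_max_right _ _
  have hQmeas : MeasurableSet Q := by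
    rw [hQdef, Set.setOf_and]
    exact (measurableSet_le (hhc.comp continuous_fst).measurable
        (continuous_const.mul (continuous_fst.comp continuous_snd)).measurable).inter
      (measurableSet_le ((hfc.comp continuous_fst).add
          (continuous_const.mul (continuous_fst.comp continuous_snd))).measurable
        (continuous_const.mul (continuous_snd.comp continuous_snd)).measurable)
  have hQne : Q.Nonempty := by
    refine ⟨⟨0, h 0 / a, (f 0 + a * (h 0 / a)) / b⟩, ?_, ?_⟩
    · have : a * (h 0 / a) = h 0 := by field_simp
      rw [this]
    · have : b * ((f 0 + a * (h 0 / a)) / b) = f 0 + a * (h 0 / a) := by field_simp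
      rw [this]
  -- G is a lower bound for the distance
  have hGle : ∀ q, G q ≤ edist3 q Q := by
    intro q
    rw [edist3]
    apply le_csInf (hQne.image _)
    rintro y ⟨p, hp, rfl⟩
    obtain ⟨hp1, hp2⟩ := hp
    show G q ≤ enorm3 (q - p)
    have henorm : enorm3 (q - p) = Real.sqrt (‖q.1 - p.1‖ ^ 2
        + (q.2.1 - p.2.1) ^ 2 + (q.2.2 - p.2.2) ^ 2) := by
      rw [enorm3]
      rfl
    rw [henorm]
    set X := ‖q.1 - p.1‖ with hXdef
    set S := q.2.1 - p.2.1 with hSdef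
    set T := q.2.2 - p.2.2 with hTdef
    set N := Real.sqrt (X ^ 2 + S ^ 2 + T ^ 2) with hNdef
    have hX : 0 ≤ X := norm_nonneg _
    have hN0 : 0 ≤ N := Real.sqrt_nonneg _
    have hNsq : N ^ 2 = X ^ 2 + S ^ 2 + T ^ 2 := Real.sq_sqrt (by positivity)
    have hhub : h q.1 - h p.1 ≤ Lh * X := le_of_abs_le (hhL q.1 p.1)
    have hfub : f q.1 - f p.1 ≤ Lf * X := le_of_abs_le (hfL q.1 p.1)
    have key1 : h q.1 - a * q.2.1 ≤ Ch * N := by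
      have h1 : h q.1 - a * q.2.1 ≤ Lh * X - a * S := by
        have hS : a * q.2.1 = a * p.2.1 + a * S := by rw [hSdef]; ring
        linarith
      have h2 : (Lh * X - a * S) ^ 2 ≤ Ch ^ 2 * N ^ 2 := by
        rw [hChsq, hNsq]
        exact aux_cs2 a Lh X S T
      calc h q.1 - a * q.2.1 ≤ Lh * X - a * S := h1
        _ ≤ |Lh * X - a * S| := le_abs_self _
        _ = Real.sqrt ((Lh * X - a * S) ^ 2) := (Real.sqrt_sq_eq_abs _).symm
        _ ≤ Real.sqrt (Ch ^ 2 * N ^ 2) := Real.sqrt_le_sqrt h2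
        _ = Ch * N := by
            rw [show Ch ^ 2 * N ^ 2 = (Ch * N) ^ 2 by ring,
              Real.sqrt_sq (mul_nonneg hCh.le hN0)]
    have key2 : f q.1 + a * q.2.1 - b * q.2.2 ≤ Cf * N := by
      have h1 : f q.1 + a * q.2.1 - b * q.2.2 ≤ Lf * X + a * S - b * T := by
        have hS : a * q.2.1 = a * p.2.1 + a * S := by rw [hSdef]; ring
        have hT : b * q.2.2 = b * p.2.2 + b * T := by rw [hTdef]; ring
        linarith
      have h2 : (Lf * X + a * S - b * T) ^ 2 ≤ Cf ^ 2 * N ^ 2 := by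
        rw [hCfsq, hNsq]
        exact aux_cs3 a b Lf X S T
      calc f q.1 + a * q.2.1 - b * q.2.2 ≤ Lf * X + a * S - b * T := h1
        _ ≤ |Lf * X + a * S - b * T| := le_abs_self _
        _ = Real.sqrt ((Lf * X + a * S - b * T) ^ 2) := (Real.sqrt_sq_eq_abs _).symm
        _ ≤ Real.sqrt (Cf ^ 2 * N ^ 2) := Real.sqrt_le_sqrt h2
        _ = Cf * N := by
            rw [show Cf ^ 2 * N ^ 2 = (Cf * N) ^ 2 by ring,
              Real.sqrt_sq (mul_nonneg hCf.le hN0)]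
    rw [hGdef]
    apply max_le (max_le _ _) hN0
    · rw [div_le_iff₀ hCh]
      calc h q.1 - a * q.2.1 ≤ Ch * N := key1
        _ = N * Ch := mul_comm _ _
    · rw [div_le_iff₀ hCf]
      calc f q.1 + a * q.2.1 - b * q.2.2 ≤ Cf * N := key2
        _ = N * Cf := mul_comm _ _
  -- pointwise step: Gaussian factor bounded by tail integral
  have hstep1 : ∀ q : EuclideanSpace ℝ (Fin d) × ℝ × ℝ,
      ENNReal.ofReal (Real.exp (-b * q.2.2)
          * Real.exp (-(edist3 q Q - τ) ^ 2 / (2 * η)))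
      ≤ ENNReal.ofReal (Real.exp (-b * q.2.2))
          * ∫⁻ r in Ioi (G q), ENNReal.ofReal (auxPhi η τ r) := by
    intro q
    rw [ENNReal.ofReal_mul (Real.exp_pos _).le]
    apply mul_le_mul_right
    rw [aux_tail η τ (G q) hη]
    apply ENNReal.ofReal_le_ofReal
    apply Real.exp_le_exp.mpr
    have hsq : max (G q - τ) 0 ^ 2 ≤ (edist3 q Q - τ) ^ 2 := by
      rcases le_or_gt (G q) τ with hle | hlt
      · rw [max_eq_right (by linarith)]
        simpa using sq_nonneg (edist3 q Q - τ)
      · rw [max_eq_left (by linarith)]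
        have hD := hGle q
        apply pow_le_pow_left₀ (by linarith) (by linarith)
    rw [div_eq_mul_inv, div_eq_mul_inv]
    exact mul_le_mul_of_nonneg_right (neg_le_neg hsq) (by positivity)
  -- the kernel on the product space
  set K : (EuclideanSpace ℝ (Fin d) × ℝ × ℝ) × ℝ → ℝ≥0∞ := fun z =>
    Set.indicator {w : (EuclideanSpace ℝ (Fin d) × ℝ × ℝ) × ℝ | G w.1 < w.2}
      (fun w => ENNReal.ofReal (Real.exp (-b * w.1.2.2))
        * ENNReal.ofReal (auxPhi η τ w.2)) z with hKdef
  have hKm : Measurable K := by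
    apply Measurable.indicator
    · apply Measurable.mul (f := fun w : (EuclideanSpace ℝ (Fin d) × ℝ × ℝ) × ℝ =>
          ENNReal.ofReal (Real.exp (-b * w.1.2.2))) (g := fun w => ENNReal.ofReal (auxPhi η τ w.2))
      · exact ((continuous_const.mul
          (continuous_snd.comp (continuous_snd.comp continuous_fst))).rexp.measurable).ennreal_ofReal
      · exact (((aux_phi_cont η τ hη).comp continuous_snd).measurable).ennreal_ofReal
    · exact measurableSet_lt (hGc.comp continuous_fst).measurable measurable_snd
  have hinner : ∀ q : EuclideanSpace ℝ (Fin d) × ℝ × ℝ,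
      ENNReal.ofReal (Real.exp (-b * q.2.2))
          * ∫⁻ r in Ioi (G q), ENNReal.ofReal (auxPhi η τ r)
        = ∫⁻ r, K (q, r) := by
    intro q
    rw [← lintegral_const_mul' _ _ ENNReal.ofReal_ne_top,
      ← lintegral_indicator measurableSet_Ioi]
    rfl
  have hswap : ∫⁻ q : EuclideanSpace ℝ (Fin d) × ℝ × ℝ, ∫⁻ r : ℝ, K (q, r)
      = ∫⁻ r : ℝ, ∫⁻ q : EuclideanSpace ℝ (Fin d) × ℝ × ℝ, K (q, r) := by
    apply lintegral_lintegral_swap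
    exact (hKm.comp (measurable_fst.prodMk measurable_snd)).aemeasurable
  -- per-r bound via the shift map
  set Z := ∫⁻ p in Q, ENNReal.ofReal (Real.exp (-b * p.2.2)) with hZdef
  have hMr : ∀ r : ℝ, (∫⁻ q : EuclideanSpace ℝ (Fin d) × ℝ × ℝ, K (q, r))
      ≤ Z * ENNReal.ofReal (auxPhi η τ r * Real.exp (C * r)) := by
    intro r
    rcases le_or_gt r τ with hrτ | hrτ
    · have hφ0 : auxPhi η τ r = 0 := by
        unfold auxPhi
        rw [max_eq_right (by linarith)]
        simp
      have hK0 : ∀ q : EuclideanSpace ℝ (Fin d) × ℝ × ℝ, K (q, r) = 0 := by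
        intro q
        simp [hKdef, Set.indicator_apply, hφ0]
      simp [hK0]
    · have hr0 : 0 < r := lt_of_le_of_lt hτ hrτ
      have hK2 : ∀ q : EuclideanSpace ℝ (Fin d) × ℝ × ℝ, K (q, r)
          = ENNReal.ofReal (auxPhi η τ r)
            * Set.indicator {q' : EuclideanSpace ℝ (Fin d) × ℝ × ℝ | G q' < r}
              (fun q' => ENNReal.ofReal (Real.exp (-b * q'.2.2))) q := by
        intro q
        simp only [hKdef, Set.indicator_apply, Set.mem_setOf_eq]
        split_ifs with hc
        · rw [mul_comm]
        · rw [mul_zero]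
      simp only [hK2]
      rw [lintegral_const_mul' _ _ ENNReal.ofReal_ne_top]
      have hM : (∫⁻ q : EuclideanSpace ℝ (Fin d) × ℝ × ℝ,
          Set.indicator {q' : EuclideanSpace ℝ (Fin d) × ℝ × ℝ | G q' < r}
            (fun q' => ENNReal.ofReal (Real.exp (-b * q'.2.2))) q)
          ≤ ENNReal.ofReal (Real.exp (C * r)) * Z := by
        set c1 := Ch * r / a with hc1def
        set c2 := C * r / b with hc2def
        set shift : EuclideanSpace ℝ (Fin d) × ℝ × ℝ → EuclideanSpace ℝ (Fin d) × ℝ × ℝ :=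
          Prod.map id (Prod.map (· + c1) (· + c2)) with hshiftdef
        have hshift_app : ∀ q : EuclideanSpace ℝ (Fin d) × ℝ × ℝ,
            shift q = (q.1, q.2.1 + c1, q.2.2 + c2) := fun q => rfl
        have hsub : {q' : EuclideanSpace ℝ (Fin d) × ℝ × ℝ | G q' < r} ⊆ shift ⁻¹' Q := by
          intro q hq
          simp only [Set.mem_setOf_eq] at hq
          have h1 : (h q.1 - a * q.2.1) / Ch < r :=
            lt_of_le_of_lt (le_trans (le_max_left _ _) (le_max_left _ _)) hq
          have h2 : (f q.1 + a * q.2.1 - b * q.2.2) / Cf < r :=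
            lt_of_le_of_lt (le_trans (le_max_right _ _) (le_max_left _ _)) hq
          rw [div_lt_iff₀ hCh] at h1
          rw [div_lt_iff₀ hCf] at h2
          simp only [Set.mem_preimage, hshift_app, hQdef, Set.mem_setOf_eq]
          constructor
          · have he : a * (q.2.1 + c1) = a * q.2.1 + Ch * r := by
              rw [hc1def]; field_simp
            rw [he]
            nlinarith
          · have he : b * (q.2.2 + c2) = b * q.2.2 + C * r := by
              rw [hc2def]; field_simp
            have he2 : a * (q.2.1 + c1) = a * q.2.1 + Ch * r := by
              rw [hc1def]; field_simp
            rw [he, he2, hCdef]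
            nlinarith
        have hmp : MeasurePreserving shift volume volume := by
          rw [hshiftdef]
          exact (MeasurePreserving.id volume).prod
            ((measurePreserving_add_right volume c1).prod
              (measurePreserving_add_right volume c2))
        have hindm : Measurable (Q.indicator
            (fun p : EuclideanSpace ℝ (Fin d) × ℝ × ℝ =>
              ENNReal.ofReal (Real.exp (-b * p.2.2)))) := by
          apply Measurable.indicator _ hQmeas
          exact ((continuous_const.mul
            (continuous_snd.comp continuous_snd)).rexp.measurable).ennreal_ofReal
        calc (∫⁻ q : EuclideanSpace ℝ (Fin d) × ℝ × ℝ,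
            Set.indicator {q' : EuclideanSpace ℝ (Fin d) × ℝ × ℝ | G q' < r}
              (fun q' => ENNReal.ofReal (Real.exp (-b * q'.2.2))) q)
            ≤ ∫⁻ q : EuclideanSpace ℝ (Fin d) × ℝ × ℝ,
              Set.indicator (shift ⁻¹' Q)
                (fun q' => ENNReal.ofReal (Real.exp (-b * q'.2.2))) q :=
              lintegral_mono fun q =>
                Set.indicator_le_indicator_of_subset hsub (fun _ => zero_le) q
          _ = ENNReal.ofReal (Real.exp (C * r))
              * ∫⁻ q : EuclideanSpace ℝ (Fin d) × ℝ × ℝ,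
                Q.indicator (fun p => ENNReal.ofReal (Real.exp (-b * p.2.2))) (shift q) := by
              rw [← lintegral_const_mul' _ _ ENNReal.ofReal_ne_top]
              congr 1
              funext q
              by_cases hqm : q ∈ shift ⁻¹' Q
              · rw [Set.indicator_of_mem hqm, Set.indicator_of_mem (Set.mem_preimage.mp hqm)]
                rw [hshift_app]
                rw [← ENNReal.ofReal_mul (Real.exp_pos _).le, ← Real.exp_add]
                congr 2
                rw [hc2def]
                field_simp
                ring
              · rw [Set.indicator_of_notMem hqm,
                  Set.indicator_of_notMem (fun hc => hqm (Set.mem_preimage.mpr hc)), mul_zero]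
          _ = ENNReal.ofReal (Real.exp (C * r))
              * ∫⁻ p : EuclideanSpace ℝ (Fin d) × ℝ × ℝ,
                Q.indicator (fun p => ENNReal.ofReal (Real.exp (-b * p.2.2))) p := by
              rw [hmp.lintegral_comp hindm]
          _ = ENNReal.ofReal (Real.exp (C * r)) * Z := by
              rw [hZdef, lintegral_indicator hQmeas]
      calc ENNReal.ofReal (auxPhi η τ r)
            * ∫⁻ q : EuclideanSpace ℝ (Fin d) × ℝ × ℝ,
              Set.indicator {q' : EuclideanSpace ℝ (Fin d) × ℝ × ℝ | G q' < r}
                (fun q' => ENNReal.ofReal (Real.exp (-b * q'.2.2))) q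
          ≤ ENNReal.ofReal (auxPhi η τ r) * (ENNReal.ofReal (Real.exp (C * r)) * Z) :=
            mul_le_mul_right hM _
        _ = Z * ENNReal.ofReal (auxPhi η τ r * Real.exp (C * r)) := by
            rw [ENNReal.ofReal_mul (aux_phi_nonneg η τ hη r)]
            ring
  -- assemble everything
  calc ∫⁻ q : EuclideanSpace ℝ (Fin d) × ℝ × ℝ,
      ENNReal.ofReal (Real.exp (-b * q.2.2)
        * Real.exp (-(edist3 q Q - τ) ^ 2 / (2 * η)))
      ≤ ∫⁻ q : EuclideanSpace ℝ (Fin d) × ℝ × ℝ,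
          ENNReal.ofReal (Real.exp (-b * q.2.2))
            * ∫⁻ r in Ioi (G q), ENNReal.ofReal (auxPhi η τ r) :=
        lintegral_mono hstep1
    _ = ∫⁻ q : EuclideanSpace ℝ (Fin d) × ℝ × ℝ, ∫⁻ r : ℝ, K (q, r) :=
        lintegral_congr hinner
    _ = ∫⁻ r : ℝ, ∫⁻ q : EuclideanSpace ℝ (Fin d) × ℝ × ℝ, K (q, r) := hswap
    _ ≤ ∫⁻ r : ℝ, Z * ENNReal.ofReal (auxPhi η τ r * Real.exp (C * r)) :=
        lintegral_mono hMr
    _ = Z * ∫⁻ r : ℝ, ENNReal.ofReal (auxPhi η τ r * Real.exp (C * r)) :=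
        lintegral_const_mul Z
          ((((aux_phi_cont η τ hη).mul (continuous_const.mul continuous_id).rexp).measurable).ennreal_ofReal)
    _ ≤ Z * ENNReal.ofReal (Real.exp (τ * C)
          * (C * Real.sqrt (2 * Real.pi * η) * Real.exp (η * C ^ 2 / 2) + 1)) :=
        mul_le_mul_right (aux_phi_exp η τ C hη hτ hC0) _
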